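/- Let κ satisfy (κ₁) with finite moments m₀(κ), m₁(κ), m₂(κ) and (κ₂) with ζ > 0. Then for every h ∈ B^w(ℝ₊) (i.e., sup_{z>0} |h(z)|/(1+(log z)²) = ‖h‖_w < ∞) and every z > 0, |M_m^κ(h, z)| / (1 + (log z)²) ≤ (‖h‖_w / ζ) [ (1 + 1/m + 1/(3m²)) m₀(κ) + (1/m + 1/m²) m₁(κ) + (1/m²) m₂(κ) ]. Consequently M_m^κ maps B^w(ℝ₊) into B^w(ℝ₊), with operator norm at most (1/ζ)[(1 + 1/m + 1/(3m²)) m₀(κ) + (1/m + 1/m²) m₁(κ) + m₂(κ)/m²]. -/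

import Mathlib

open Real MeasureTheory

/-- Max-product Kantorovich exponential sampling operator over all integers. -/
noncomputable def MopZ (κ : ℝ → ℝ) (m : ℝ) (h : ℝ → ℝ) (z : ℝ) : ℝ :=
  sSup (Set.range fun j : ℤ => κ (Real.exp (-(j : ℝ)) * z ^ m) *
      (m * ∫ v in (j : ℝ)/m..((j : ℝ) + 1)/m, h (Real.exp v))) /
  sSup (Set.range fun j : ℤ => κ (Real.exp (-(j : ℝ)) * z ^ m))

lemma intBound (h : ℝ → ℝ) (N : ℝ) (hN0 : 0 ≤ N)
    (hN : ∀ z : ℝ, 0 < z → |h z| ≤ N * (1 + (Real.log z) ^ 2))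
    (a b : ℝ) (hab : a ≤ b) :
    |∫ v in a..b, h (Real.exp v)| ≤ N * ((b - a) + (b^3 - a^3)/3) := by
  have hg : (∫ v in a..b, N * (1 + v^2)) = N * ((b - a) + (b^3 - a^3)/3) := by
    rw [intervalIntegral.integral_const_mul,
      intervalIntegral.integral_add intervalIntegrable_const
        ((continuous_pow 2).intervalIntegrable a b)]
    simp only [intervalIntegral.integral_const, integral_pow, smul_eq_mul, mul_one]
    norm_num
  have hpt : ∀ v ∈ Set.Icc a b, |h (Real.exp v)| ≤ N * (1 + v^2) := by
    intro v _
    have := hN (Real.exp v) (Real.exp_pos v)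
    rwa [Real.log_exp] at this
  have h1 : |∫ v in a..b, h (Real.exp v)| ≤ ∫ v in a..b, |h (Real.exp v)| :=
    intervalIntegral.abs_integral_le_integral_abs hab
  have h2 : (∫ v in a..b, |h (Real.exp v)|) ≤ ∫ v in a..b, N * (1 + v^2) := by
    by_cases hi : IntervalIntegrable (fun v => |h (Real.exp v)|) volume a b
    · exact intervalIntegral.integral_mono_on hab hi
        ((continuous_const.mul (continuous_const.add (continuous_pow 2))).intervalIntegrable a b)
        hpt
    · rw [intervalIntegral.integral_undef hi]
      exact intervalIntegral.integral_nonneg hab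
        (fun v _ => mul_nonneg hN0 (by positivity))
  calc |∫ v in a..b, h (Real.exp v)| ≤ ∫ v in a..b, N * (1 + v^2) := h1.trans h2
    _ = _ := hg

lemma polyIneq (M0 M1 M2 a x d m : ℝ) (hm : 0 < m) (ha : 0 ≤ a) (h0 : a ≤ M0)
    (h1 : a * |d| ≤ M1) (h2 : a * d ^ 2 ≤ M2) :
    a * (m^2 + (d + m*x)^2 + (d + m*x) + 1/3) ≤
      (1 + x^2) * ((m^2 + m + 1/3) * M0 + (m + 1) * M1 + M2) := by
  have hm2 : (0:ℝ) < m^2 := by positivity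
  have hM0 : 0 ≤ M0 := ha.trans h0
  have hM1 : 0 ≤ M1 := le_trans (mul_nonneg ha (abs_nonneg d)) h1
  have hM2 : 0 ≤ M2 := le_trans (mul_nonneg ha (sq_nonneg d)) h2
  have hxhalf : |x| ≤ (1 + x^2)/2 := by nlinarith [sq_nonneg (|x| - 1), sq_abs x]
  have hxa : |x| ≤ 1 + x^2 := by nlinarith [hxhalf, sq_nonneg x]
  have hdx : a * (d * x) ≤ a * (|d| * |x|) := by
    have := mul_le_mul_of_nonneg_left (le_abs_self (d * x)) ha
    rwa [abs_mul] at this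
  have had : a * d ≤ a * |d| := mul_le_mul_of_nonneg_left (le_abs_self d) ha
  have hax : a * x ≤ a * |x| := mul_le_mul_of_nonneg_left (le_abs_self x) ha
  have T3 : 2 * (a * (d * x)) * m ≤ M1 * (m * (1 + x^2)) := by
    have s1 : a * |d| * |x| ≤ M1 * |x| := mul_le_mul_of_nonneg_right h1 (abs_nonneg x)
    have s2 : M1 * |x| ≤ M1 * ((1 + x^2)/2) := mul_le_mul_of_nonneg_left hxhalf hM1
    have heq : a * (|d| * |x|) = a * |d| * |x| := by ring
    have t : a * (d * x) ≤ M1 * ((1 + x^2)/2) := by linarith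
    have := mul_le_mul_of_nonneg_right t hm.le
    nlinarith [this]
  have T6 : a * x * m ≤ M0 * (m * (1 + x^2)) := by
    have s1 : a * |x| ≤ M0 * |x| := mul_le_mul_of_nonneg_right h0 (abs_nonneg x)
    have s2 : M0 * |x| ≤ M0 * (1 + x^2) := mul_le_mul_of_nonneg_left hxa hM0
    have t : a * x ≤ M0 * (1 + x^2) := by linarith
    have := mul_le_mul_of_nonneg_right t hm.le
    nlinarith [this]
  have T5 : a * d ≤ M1 := had.trans h1
  have T1 : a * m^2 ≤ M0 * m^2 := mul_le_mul_of_nonneg_right h0 hm2.le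
  have T4 : a * (m^2 * x^2) ≤ M0 * (m^2 * x^2) :=
    mul_le_mul_of_nonneg_right h0 (by positivity)
  nlinarith [T1, T3, T4, T5, T6, h2, h0, mul_nonneg hM0 (sq_nonneg x),
    mul_nonneg hM1 (sq_nonneg x), mul_nonneg hM2 (sq_nonneg x)]

lemma keyAlg (M0 M1 M2 a x jr m : ℝ) (hm : 0 < m) (ha : 0 ≤ a)
    (h0 : a ≤ M0) (h1 : a * |jr - m * x| ≤ M1) (h2 : a * |jr - m * x| ^ 2 ≤ M2) :
    a * (1 + (jr^2 + jr + 1/3)/m^2) ≤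
      (1 + x^2) * ((1 + 1/m + 1/(3 * m ^ 2)) * M0 + (1/m + 1/m ^ 2) * M1 + (1/m ^ 2) * M2) := by
  have hm2 : (0:ℝ) < m^2 := by positivity
  have h2' : a * (jr - m * x) ^ 2 ≤ M2 := by rwa [sq_abs] at h2
  have key := polyIneq M0 M1 M2 a x (jr - m * x) m hm ha h0 h1 h2'
  have hjr : jr - m * x + m * x = jr := by ring
  rw [hjr] at key
  have e1 : a * (1 + (jr^2 + jr + 1/3)/m^2)
      = (a * (m^2 + jr^2 + jr + 1/3)) / m^2 := by
    field_simp
    ring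
  have e2 : (1 + x^2) * ((1 + 1/m + 1/(3 * m ^ 2)) * M0 + (1/m + 1/m ^ 2) * M1 + (1/m ^ 2) * M2)
      = ((1 + x^2) * ((m^2 + m + 1/3) * M0 + (m + 1) * M1 + M2)) / m^2 := by
    field_simp
  rw [e1, e2, div_le_div_iff_of_pos_right hm2]
  exact key

theorem MopZ_weighted_bound (κ : ℝ → ℝ) (M0 M1 M2 ζ : ℝ) (hζ : 0 < ζ)
    (hinf : ∀ u ∈ Set.Icc (1 : ℝ) (Real.exp 1), ζ ≤ κ u)
    (hm0 : ∀ s : ℝ, 0 < s → ∀ j : ℤ, |κ (Real.exp (-(j : ℝ)) * s)| ≤ M0)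
    (hm1 : ∀ s : ℝ, 0 < s → ∀ j : ℤ,
      |κ (Real.exp (-(j : ℝ)) * s)| * |(j : ℝ) - Real.log s| ≤ M1)
    (hm2 : ∀ s : ℝ, 0 < s → ∀ j : ℤ,
      |κ (Real.exp (-(j : ℝ)) * s)| * |(j : ℝ) - Real.log s| ^ 2 ≤ M2)
    (h : ℝ → ℝ) (N : ℝ) (hN : ∀ z : ℝ, 0 < z → |h z| / (1 + (Real.log z) ^ 2) ≤ N)
    (m : ℝ) (hm : 0 < m) :
    (∀ z : ℝ, 0 < z →
      |MopZ κ m h z| / (1 + (Real.log z) ^ 2) ≤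
        (N / ζ) * ((1 + 1/m + 1/(3 * m ^ 2)) * M0 + (1/m + 1/m ^ 2) * M1 + (1/m ^ 2) * M2)) ∧
    (∃ K : ℝ, ∀ z : ℝ, 0 < z → |MopZ κ m h z| / (1 + (Real.log z) ^ 2) ≤ K) := by
  have hN0 : 0 ≤ N := by
    have := hN 1 one_pos
    simp at this
    exact le_trans (abs_nonneg _) this
  have hN' : ∀ z : ℝ, 0 < z → |h z| ≤ N * (1 + (Real.log z) ^ 2) := by
    intro z hz
    have hpos : (0:ℝ) < 1 + (Real.log z) ^ 2 := by positivity
    have := hN z hz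
    rw [div_le_iff₀ hpos] at this
    linarith
  set B : ℝ := (1 + 1/m + 1/(3 * m ^ 2)) * M0 + (1/m + 1/m ^ 2) * M1 + (1/m ^ 2) * M2 with hB
  have main : ∀ z : ℝ, 0 < z →
      |MopZ κ m h z| / (1 + (Real.log z) ^ 2) ≤ (N / ζ) * B := by
    intro z hz
    set x : ℝ := Real.log z with hx
    have hx2 : (0:ℝ) < 1 + x ^ 2 := by positivity
    have hs : (0:ℝ) < z ^ m := Real.rpow_pos_of_pos hz m
    have hlogs : Real.log (z ^ m) = m * x := Real.log_rpow hz m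
    set f : ℤ → ℝ := fun j => κ (Real.exp (-(j : ℝ)) * z ^ m) with hf
    set g : ℤ → ℝ := fun j =>
      f j * (m * ∫ v in (j : ℝ)/m..((j : ℝ) + 1)/m, h (Real.exp v)) with hg
    -- per-term bound for the numerator
    have hgb : ∀ j : ℤ, |g j| ≤ N * ((1 + x ^ 2) * B) := by
      intro j
      have hab : (j : ℝ)/m ≤ ((j : ℝ) + 1)/m := by
        apply div_le_div_of_nonneg_right (by linarith) hm.le
      have hint := intBound h N hN0 hN' ((j : ℝ)/m) (((j : ℝ) + 1)/m) hab
      have hval : m * (N * ((((j : ℝ) + 1)/m - (j : ℝ)/m) +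
          ((((j : ℝ) + 1)/m)^3 - ((j : ℝ)/m)^3)/3))
          = N * (1 + ((j:ℝ)^2 + (j:ℝ) + 1/3)/m^2) := by
        field_simp
        ring
      have hIm : |m * ∫ v in (j : ℝ)/m..((j : ℝ) + 1)/m, h (Real.exp v)|
          ≤ N * (1 + ((j:ℝ)^2 + (j:ℝ) + 1/3)/m^2) := by
        rw [abs_mul, abs_of_pos hm, ← hval]
        exact mul_le_mul_of_nonneg_left hint hm.le
      have hk0 : |f j| ≤ M0 := hm0 (z ^ m) hs j
      have hk1 : |f j| * |(j : ℝ) - m * x| ≤ M1 := by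
        have := hm1 (z ^ m) hs j
        rwa [hlogs] at this
      have hk2 : |f j| * |(j : ℝ) - m * x| ^ 2 ≤ M2 := by
        have := hm2 (z ^ m) hs j
        rwa [hlogs] at this
      have hka := keyAlg M0 M1 M2 (|f j|) x ((j : ℝ)) m hm (abs_nonneg _) hk0 hk1 hk2
      calc |g j| = |f j| * |m * ∫ v in (j : ℝ)/m..((j : ℝ) + 1)/m, h (Real.exp v)| := by
            rw [hg, abs_mul]
        _ ≤ |f j| * (N * (1 + ((j:ℝ)^2 + (j:ℝ) + 1/3)/m^2)) :=
            mul_le_mul_of_nonneg_left hIm (abs_nonneg _)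
        _ = N * (|f j| * (1 + ((j:ℝ)^2 + (j:ℝ) + 1/3)/m^2)) := by ring
        _ ≤ N * ((1 + x ^ 2) * B) := mul_le_mul_of_nonneg_left hka hN0
    have hC0 : 0 ≤ N * ((1 + x ^ 2) * B) := by
      have hM0 : 0 ≤ M0 := le_trans (abs_nonneg _) (hm0 1 one_pos 0)
      have hM1 : 0 ≤ M1 := le_trans (by positivity) (hm1 1 one_pos 0)
      have hM2 : 0 ≤ M2 := le_trans (by positivity) (hm2 1 one_pos 0)
      have hBpos : 0 ≤ B := by
        rw [hB]
        have h1 : (0:ℝ) ≤ 1 + 1/m + 1/(3 * m ^ 2) := by positivity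
        have h2 : (0:ℝ) ≤ 1/m + 1/m ^ 2 := by positivity
        have h3 : (0:ℝ) ≤ 1/m ^ 2 := by positivity
        have := add_nonneg (add_nonneg (mul_nonneg h1 hM0) (mul_nonneg h2 hM1))
          (mul_nonneg h3 hM2)
        linarith
      positivity
    -- denominator bounds
    have hfbdd : BddAbove (Set.range f) := by
      refine ⟨M0, ?_⟩
      rintro _ ⟨j, rfl⟩
      exact le_trans (le_abs_self _) (hm0 (z ^ m) hs j)
    have hDζ : ζ ≤ sSup (Set.range f) := by
      set j0 : ℤ := ⌊Real.log (z ^ m)⌋ with hj0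
      have hmem : Real.exp (-(j0 : ℝ)) * z ^ m ∈ Set.Icc (1:ℝ) (Real.exp 1) := by
        have he : Real.exp (-(j0 : ℝ)) * z ^ m = Real.exp (Real.log (z ^ m) - (j0 : ℝ)) := by
          rw [Real.exp_sub, Real.exp_log hs]
          rw [Real.exp_neg]
          field_simp
        rw [he]
        constructor
        · rw [show (1:ℝ) = Real.exp 0 by simp]
          exact Real.exp_le_exp.mpr (by linarith [Int.floor_le (Real.log (z ^ m))])
        · exact Real.exp_le_exp.mpr (by linarith [Int.lt_floor_add_one (Real.log (z ^ m))])
      have : ζ ≤ f j0 := hinf _ hmem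
      exact le_trans this (le_csSup hfbdd ⟨j0, rfl⟩)
    have hDpos : 0 < sSup (Set.range f) := lt_of_lt_of_le hζ hDζ
    -- numerator bound
    have hgbdd : BddAbove (Set.range g) := by
      refine ⟨N * ((1 + x ^ 2) * B), ?_⟩
      rintro _ ⟨j, rfl⟩
      exact le_trans (le_abs_self _) (hgb j)
    have hNumUp : sSup (Set.range g) ≤ N * ((1 + x ^ 2) * B) :=
      Real.sSup_le (by rintro _ ⟨j, rfl⟩; exact le_trans (le_abs_self _) (hgb j)) hC0
    have hNumLo : -(N * ((1 + x ^ 2) * B)) ≤ sSup (Set.range g) := by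
      refine le_trans ?_ (le_csSup hgbdd ⟨0, rfl⟩)
      have := (abs_le.mp (hgb 0)).1
      linarith
    have hNumAbs : |sSup (Set.range g)| ≤ N * ((1 + x ^ 2) * B) :=
      abs_le.mpr ⟨hNumLo, hNumUp⟩
    -- combine
    have hMop : MopZ κ m h z = sSup (Set.range g) / sSup (Set.range f) := rfl
    have habs : |MopZ κ m h z| = |sSup (Set.range g)| / sSup (Set.range f) := by
      rw [hMop, abs_div, abs_of_pos hDpos]
    have hdiv : |sSup (Set.range g)| / sSup (Set.range f) ≤ N * ((1 + x ^ 2) * B) / ζ :=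
      div_le_div₀ hC0 hNumAbs hζ hDζ
    rw [habs]
    rw [div_le_iff₀ hx2]
    refine le_trans hdiv (le_of_eq ?_)
    field_simp
  exact ⟨main, ⟨(N / ζ) * B, main⟩⟩
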